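/- Let p be an odd prime and t ∈ 𝔽_p. Then t² − 4 is a nonsquare in 𝔽_p (that is, there is no a ∈ 𝔽_p with t² − 4 = a²) if and only if there exists y in 𝔽_{p²} with y ≠ 1, y ≠ −1, y^(p+1) = 1, and the image of t in 𝔽_{p²} equals y + y⁻¹. -/
import Mathlib
open Polynomial

lemma sq_lemma (p : ℕ) [Fact p.Prime] (a : GaloisField p 2) (h : a ≠ 0) (hodd : p ≠ 2)
    (hpow : a ^ (p ^ 2 / 2) = 1) : IsSquare a := by
  haveI : Fintype (GaloisField p 2) := Fintype.ofFinite _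
  have hcard : Fintype.card (GaloisField p 2) = p ^ 2 := by
    rw [← Nat.card_eq_fintype_card]; exact GaloisField.card p 2 (by norm_num)
  have h2 : ringChar (GaloisField p 2) ≠ 2 := by rw [ringChar.eq (GaloisField p 2) p]; exact hodd
  rw [FiniteField.isSquare_iff h2 h, hcard]
  exact hpow

lemma fixed_lemma (p : ℕ) [Fact p.Prime] (x : GaloisField p 2) (hx : x ^ p = x) :
    ∃ a : ZMod p, algebraMap (ZMod p) (GaloisField p 2) a = x := by
  classical
  have hp := (Fact.out : p.Prime)
  set f : (GaloisField p 2)[X] := X ^ p - X with hf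
  have hf0 : f ≠ 0 := by
    intro h
    have : f.coeff p = 0 := by rw [h]; simp
    rw [hf, coeff_sub, coeff_X_pow, coeff_X] at this
    simp [hp.one_lt.ne] at this
  have hdeg : f.natDegree ≤ p := by
    refine le_trans (natDegree_sub_le _ _) ?_
    simp [hp.one_le]
  have hroots : ∀ a : ZMod p, algebraMap (ZMod p) (GaloisField p 2) a ∈ f.roots := by
    intro a
    rw [mem_roots hf0]
    simp only [IsRoot, hf, eval_sub, eval_pow, eval_X]
    rw [← map_pow, ZMod.pow_card, sub_self]
  set S : Finset (GaloisField p 2) := Finset.univ.image (algebraMap (ZMod p) (GaloisField p 2)) with hS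
  have hSsub : S ⊆ f.roots.toFinset := by
    intro z hz
    simp only [hS, Finset.mem_image] at hz
    obtain ⟨a, _, rfl⟩ := hz
    rw [Multiset.mem_toFinset]
    exact hroots a
  have hScard : S.card = p := by
    rw [hS, Finset.card_image_of_injective _ (algebraMap (ZMod p) (GaloisField p 2)).injective,
      Finset.card_univ, ZMod.card]
  have hrc : f.roots.toFinset.card ≤ p :=
    le_trans (Multiset.toFinset_card_le _) (le_trans f.card_roots' hdeg)
  have heq : S = f.roots.toFinset := Finset.eq_of_subset_of_card_le hSsub (by omega)
  have hxmem : x ∈ f.roots.toFinset := by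
    rw [Multiset.mem_toFinset, mem_roots hf0]
    simp only [IsRoot, hf, eval_sub, eval_pow, eval_X, hx, sub_self]
  rw [← heq] at hxmem
  simp only [hS, Finset.mem_image] at hxmem
  obtain ⟨a, _, ha⟩ := hxmem
  exact ⟨a, ha⟩

theorem elliptic_iff (p : ℕ) [Fact p.Prime] (hodd : p ≠ 2) (t : ZMod p) :
    (¬ ∃ a : ZMod p, t ^ 2 - 4 = a ^ 2) ↔
      ∃ y : GaloisField p 2, y ≠ 1 ∧ y ≠ -1 ∧ y ^ (p + 1) = 1 ∧
        algebraMap (ZMod p) (GaloisField p 2) t = y + y⁻¹ := by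
  have hp := (Fact.out : p.Prime)
  have hinj := (algebraMap (ZMod p) (GaloisField p 2)).injective
  have hfrob : ∀ a : ZMod p, (algebraMap (ZMod p) (GaloisField p 2) a) ^ p
      = algebraMap (ZMod p) (GaloisField p 2) a := fun a => by rw [← map_pow, ZMod.pow_card]
  have hmap2 : algebraMap (ZMod p) (GaloisField p 2) 2 = 2 := map_ofNat _ 2
  have hmap4 : algebraMap (ZMod p) (GaloisField p 2) 4 = 4 := map_ofNat _ 4
  have h2p : (2 : GaloisField p 2) ^ p = 2 := by
    have := hfrob 2; rwa [hmap2] at this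
  have h2ne : (2 : GaloisField p 2) ≠ 0 := by
    have : ((2 : ℕ) : GaloisField p 2) ≠ 0 := by
      rw [Ne, CharP.cast_eq_zero_iff (GaloisField p 2) p]
      intro hdvd
      exact hodd ((Nat.prime_dvd_prime_iff_eq hp Nat.prime_two).mp hdvd)
    simpa using this
  constructor
  · -- forward
    intro hns
    have hd0 : t ^ 2 - 4 ≠ 0 := fun h => hns ⟨0, by simpa using h⟩
    have hc0 : algebraMap (ZMod p) (GaloisField p 2) (t ^ 2 - 4) ≠ 0 := fun h =>
      hd0 (hinj (by simpa using h))
    obtain ⟨k, hk⟩ := hp.odd_of_ne_two hodd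
    have hdivp : p ^ 2 / 2 = (p - 1) * ((p + 1) / 2) := by
      subst hk
      have h1 : (2 * k + 1) ^ 2 = 2 * (k * (k + 1)) * 2 + 1 := by ring
      have h3 : (2 * k + 1 - 1) * ((2 * k + 1 + 1) / 2) = 2 * (k * (k + 1)) := by
        rw [show (2 * k + 1 + 1) / 2 = k + 1 by omega, show 2 * k + 1 - 1 = 2 * k by omega]
        ring
      omega
    have hcpow : algebraMap (ZMod p) (GaloisField p 2) (t ^ 2 - 4) ^ (p ^ 2 / 2) = 1 := by
      rw [hdivp, pow_mul, ← map_pow, ZMod.pow_card_sub_one_eq_one hd0, map_one, one_pow]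
    obtain ⟨s, hs⟩ := sq_lemma p _ hc0 hodd hcpow
    have hs2 : s * s = (algebraMap (ZMod p) (GaloisField p 2) t) ^ 2 - 4 := by
      rw [← hs, map_sub, map_pow, hmap4]
    have hsp : s ^ p = -s := by
      have hsq : (s ^ p) * (s ^ p) - s * s = 0 := by
        rw [← mul_pow, ← hs, ← map_pow, ZMod.pow_card, sub_self]
      have hf2 : (s ^ p - s) * (s ^ p + s) = 0 := by linear_combination hsq
      rcases mul_eq_zero.mp hf2 with h | h
      · exfalso
        obtain ⟨a, ha⟩ := fixed_lemma p s (sub_eq_zero.mp h)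
        refine hns ⟨a, hinj ?_⟩
        rw [map_sub, map_pow, hmap4, map_pow, ha, ← hs2, sq]
      · exact eq_neg_of_add_eq_zero_left h
    have hyinv : ((algebraMap (ZMod p) (GaloisField p 2) t + s) * 2⁻¹)
        * ((algebraMap (ZMod p) (GaloisField p 2) t - s) * 2⁻¹) = 1 := by
      field_simp
      linear_combination -hs2
    have hinv : ((algebraMap (ZMod p) (GaloisField p 2) t + s) * 2⁻¹)⁻¹
        = (algebraMap (ZMod p) (GaloisField p 2) t - s) * 2⁻¹ :=
      inv_eq_of_mul_eq_one_right hyinv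
    have hy0 : (algebraMap (ZMod p) (GaloisField p 2) t + s) * 2⁻¹ ≠ 0 :=
      left_ne_zero_of_mul_eq_one hyinv
    have hsum : algebraMap (ZMod p) (GaloisField p 2) t
        = (algebraMap (ZMod p) (GaloisField p 2) t + s) * 2⁻¹
          + ((algebraMap (ZMod p) (GaloisField p 2) t + s) * 2⁻¹)⁻¹ := by
      rw [hinv]
      field_simp
      ring
    have hyp : ((algebraMap (ZMod p) (GaloisField p 2) t + s) * 2⁻¹) ^ p
        = ((algebraMap (ZMod p) (GaloisField p 2) t + s) * 2⁻¹)⁻¹ := by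
      rw [hinv, mul_pow, inv_pow, add_pow_char, ← map_pow, ZMod.pow_card, hsp, h2p]
      ring
    have hexp : ((algebraMap (ZMod p) (GaloisField p 2) t + s) * 2⁻¹) ^ (p + 1) = 1 := by
      rw [pow_succ, hyp, inv_mul_cancel₀ hy0]
    refine ⟨_, ?_, ?_, hexp, hsum⟩
    · intro h
      rw [h] at hsum
      have ht : t = 2 := by
        apply hinj
        rw [hmap2, hsum]
        norm_num
      exact hns ⟨0, by rw [ht]; norm_num⟩
    · intro h
      rw [h] at hsum
      have ht : t = -2 := by
        apply hinj
        rw [map_neg, hmap2, hsum]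
        norm_num
      exact hns ⟨0, by rw [ht]; norm_num⟩
  · -- backward
    rintro ⟨y, hy1, hym1, hyExp, hty⟩ ⟨a, ha⟩
    have hy0 : y ≠ 0 := by
      intro h; rw [h, zero_pow (Nat.succ_ne_zero p)] at hyExp; exact zero_ne_one hyExp
    have h1 : algebraMap (ZMod p) (GaloisField p 2) t * y = y * y + 1 := by
      rw [hty, add_mul, inv_mul_cancel₀ hy0]
    have hA : (algebraMap (ZMod p) (GaloisField p 2) t) ^ 2 - 4
        = (algebraMap (ZMod p) (GaloisField p 2) a) ^ 2 := by
      have := congrArg (algebraMap (ZMod p) (GaloisField p 2)) ha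
      rwa [map_sub, map_pow, map_pow, hmap4] at this
    have hfact : (2 * y - algebraMap (ZMod p) (GaloisField p 2) t
          - algebraMap (ZMod p) (GaloisField p 2) a)
        * (2 * y - algebraMap (ZMod p) (GaloisField p 2) t
          + algebraMap (ZMod p) (GaloisField p 2) a) = 0 := by
      linear_combination (-4 : GaloisField p 2) * h1 + hA
    have hyp2 : y ^ p = y := by
      rcases mul_eq_zero.mp hfact with h | h
      · have hy : y = (algebraMap (ZMod p) (GaloisField p 2) t
            + algebraMap (ZMod p) (GaloisField p 2) a) * 2⁻¹ := by
          field_simp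
          linear_combination h
        rw [hy, mul_pow, inv_pow, add_pow_char, ← map_pow, ← map_pow, ZMod.pow_card,
          ZMod.pow_card, h2p]
      · have hy : y = (algebraMap (ZMod p) (GaloisField p 2) t
            - algebraMap (ZMod p) (GaloisField p 2) a) * 2⁻¹ := by
          field_simp
          linear_combination h
        rw [hy, mul_pow, inv_pow, sub_pow_char, ← map_pow, ← map_pow, ZMod.pow_card,
          ZMod.pow_card, h2p]
    have hsq1 : y * y = 1 := by
      have := hyExp
      rw [pow_succ, hyp2] at this
      exact this
    rcases mul_self_eq_one_iff.mp hsq1 with h | h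
    · exact hy1 h
    · exact hym1 h
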